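/- Let G be a d-regular graph on n vertices (d ≥ 1) with adjacency matrix A and smallest eigenvalue λ. Then every independent set I of G satisfies |I| ≤ (−λ)/(d − λ) · n. -/

import Mathlib

open Matrix


/-- Hoffman bound: If `G` is a `d`-regular graph on `n`
vertices (`d ≥ 1`) whose adjacency matrix has smallest eigenvalue `λ`, then
every independent set `I` of `G` satisfies `|I| ≤ (-λ)/(d - λ) · n`. -/
theorem hoffman_bound {V : Type*} [Fintype V] [DecidableEq V]
    (G : SimpleGraph V) [DecidableRel G.Adj]
    (d : ℕ) (hd : 1 ≤ d) (hreg : G.IsRegularOfDegree d) (lam : ℝ)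
    (heig : ∃ v : V → ℝ, v ≠ 0 ∧ (G.adjMatrix ℝ).mulVec v = lam • v)
    (hmin : ∀ (μ : ℝ) (v : V → ℝ), v ≠ 0 →
      (G.adjMatrix ℝ).mulVec v = μ • v → lam ≤ μ)
    (I : Finset V) (hI : ∀ x ∈ I, ∀ y ∈ I, ¬ G.Adj x y) :
    (I.card : ℝ) ≤ (-lam) / ((d : ℝ) - lam) * (Fintype.card V : ℝ) := by
  classical
  set A := G.adjMatrix ℝ with hAdef
  have hA : A.IsHermitian := by
    show Aᴴ = A
    ext i j
    simp only [Matrix.conjTranspose_apply, hAdef, SimpleGraph.adjMatrix_apply,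
      star_trivial]
    by_cases h : G.Adj i j
    · simp [h, h.symm]
    · have h' : ¬ G.Adj j i := fun hh => h hh.symm
      simp [h, h']
  -- Quadratic form bound: lam * ⟨x,x⟩ ≤ ⟨x, A x⟩ for all x
  have hB : (A - lam • (1 : Matrix V V ℝ)).IsHermitian := by
    unfold Matrix.IsHermitian
    rw [Matrix.conjTranspose_sub, hA.eq, Matrix.conjTranspose_smul,
      Matrix.conjTranspose_one]
    simp
  have hev : ∀ i, 0 ≤ hB.eigenvalues i := by
    intro i
    have hw : ⇑(hB.eigenvectorBasis i) ≠ 0 :=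
      (not_congr (WithLp.ofLp_eq_zero 2)).mpr (hB.eigenvectorBasis.orthonormal.ne_zero i)
    have hm := hB.mulVec_eigenvectorBasis i
    have h1 : (A - lam • (1 : Matrix V V ℝ)) *ᵥ ⇑(hB.eigenvectorBasis i)
        = A *ᵥ ⇑(hB.eigenvectorBasis i) - lam • ⇑(hB.eigenvectorBasis i) := by
      rw [Matrix.sub_mulVec, Matrix.smul_mulVec, Matrix.one_mulVec]
    rw [h1] at hm
    have hAw : A *ᵥ ⇑(hB.eigenvectorBasis i)
        = (hB.eigenvalues i + lam) • ⇑(hB.eigenvectorBasis i) := by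
      rw [add_smul, ← hm]
      abel
    have := hmin _ _ hw hAw
    linarith
  have hPSD := hB.posSemidef_iff_eigenvalues_nonneg.mpr hev
  have key : ∀ x : V → ℝ, lam * (x ⬝ᵥ x) ≤ x ⬝ᵥ (A *ᵥ x) := by
    intro x
    have h0 := hPSD.re_dotProduct_nonneg x
    simp only [RCLike.star_def, star_trivial, RCLike.re_to_real] at h0
    rw [Matrix.sub_mulVec, Matrix.smul_mulVec, Matrix.one_mulVec,
      dotProduct_sub, dotProduct_smul, smul_eq_mul] at h0
    linarith
  -- V is nonempty
  obtain ⟨v0, hv0, -⟩ := heig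
  have hVne : Nonempty V := by
    by_contra h
    rw [not_nonempty_iff] at h
    exact hv0 (funext fun w => (h.false w).elim)
  -- lam ≤ -1
  have hlam : lam ≤ -1 := by
    obtain ⟨u⟩ := hVne
    have hcard : 0 < (G.neighborFinset u).card := by
      show 0 < G.degree u
      rw [hreg u]; omega
    obtain ⟨w, hw⟩ := Finset.card_pos.mp hcard
    rw [SimpleGraph.mem_neighborFinset] at hw
    have hne : u ≠ w := G.ne_of_adj hw
    set x : V → ℝ := Pi.single u 1 - Pi.single w 1 with hx
    have e2 : x ⬝ᵥ x = 2 := by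
      simp [hx, sub_dotProduct, dotProduct_sub,
        single_dotProduct, dotProduct_single,
        Pi.single_apply, hne, hne.symm]
      norm_num
    have e1 : x ⬝ᵥ (A *ᵥ x) = -2 := by
      rw [hx, Matrix.mulVec_sub, Matrix.mulVec_single, Matrix.mulVec_single,
        sub_dotProduct, single_dotProduct, single_dotProduct]
      simp only [Pi.sub_apply, hAdef, SimpleGraph.adjMatrix_apply]
      have h1 : ¬ G.Adj u u := G.irrefl
      have h2 : ¬ G.Adj w w := G.irrefl
      simp [h1, h2, hw, hw.symm]
      norm_num
    have := key x
    rw [e1, e2] at this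
    linarith
  set n : ℝ := (Fintype.card V : ℝ) with hn
  have hnpos : (0:ℝ) < n := by
    rw [hn]; exact_mod_cast Fintype.card_pos
  set k : ℝ := (I.card : ℝ) with hk
  have hk0 : (0:ℝ) ≤ k := by positivity
  set c : ℝ := k / n with hc
  have hcn : c * n = k := div_mul_cancel₀ k hnpos.ne'
  set j : V → ℝ := Function.const V 1 with hj
  set f : V → ℝ := fun w => if w ∈ I then (1:ℝ) else 0 with hf
  have hff : f ⬝ᵥ f = k := by
    simp [dotProduct, hf, ite_and, Finset.sum_ite_mem, hk]
  have hfj : f ⬝ᵥ j = k := by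
    simp [dotProduct, hf, hj, Finset.sum_ite_mem, hk]
  have hjf : j ⬝ᵥ f = k := by
    simp [dotProduct, hf, hj, Finset.sum_ite_mem, hk]
  have hjj : j ⬝ᵥ j = n := by
    simp [dotProduct, hj, hn, Finset.card_univ]
  have hAj : A *ᵥ j = fun _ => (d:ℝ) := by
    funext w
    rw [hAdef, hj]
    rw [SimpleGraph.adjMatrix_mulVec_const_apply_of_regular hreg]
    simp
  have hfAf : f ⬝ᵥ (A *ᵥ f) = 0 := by
    apply Finset.sum_eq_zero
    intro w _
    by_cases hwI : w ∈ I
    · have hz : (A *ᵥ f) w = 0 := by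
        rw [hAdef, SimpleGraph.adjMatrix_mulVec_apply]
        apply Finset.sum_eq_zero
        intro z hz
        rw [SimpleGraph.mem_neighborFinset] at hz
        have : z ∉ I := fun hzI => hI w hwI z hzI hz
        simp [hf, this]
      simp [hz]
    · simp [hf, hwI]
  have hfAj : f ⬝ᵥ (A *ᵥ j) = k * d := by
    rw [hAj]
    have : f ⬝ᵥ (fun _ => (d:ℝ)) = (∑ w, f w) * d := by
      simp [dotProduct, Finset.sum_mul]
    rw [this]
    simp [hf, Finset.sum_ite_mem, hk]
  have hjAf : j ⬝ᵥ (A *ᵥ f) = d * k := by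
    rw [Matrix.dotProduct_mulVec]
    have hvA : j ᵥ* A = fun _ => (d:ℝ) := by
      funext w
      rw [hAdef, hj, SimpleGraph.adjMatrix_vecMul_apply]
      simp [hreg w]
    rw [hvA]
    have : (fun _ => (d:ℝ)) ⬝ᵥ f = d * ∑ w, f w := by
      simp [dotProduct, Finset.mul_sum]
    rw [this]
    simp [hf, Finset.sum_ite_mem, hk]
  have hjAj : j ⬝ᵥ (A *ᵥ j) = n * d := by
    rw [hAj]
    simp [dotProduct, hj, hn, Finset.card_univ, mul_comm]
  set x : V → ℝ := f - c • j with hx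
  have hx1 : x ⬝ᵥ x = k - 2*c*k + c*(c*n) := by
    simp only [hx, sub_dotProduct, dotProduct_sub,
      smul_dotProduct, dotProduct_smul, smul_eq_mul,
      hff, hfj, hjf, hjj]
    ring
  have hx2 : x ⬝ᵥ (A *ᵥ x) = -(c*(k*d)) - c*(d*k) + c*(c*n)*d := by
    simp only [hx, Matrix.mulVec_sub, Matrix.mulVec_smul,
      sub_dotProduct, dotProduct_sub,
      smul_dotProduct, dotProduct_smul, smul_eq_mul,
      hfAf, hfAj, hjAf, hjAj]
    ring
  have hkey := key x
  rw [hx1, hx2, hcn] at hkey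
  -- hkey : lam * (k - 2*c*k + c*k) ≤ -(c*(k*d)) - c*(d*k) + c*k*d
  have hdl : (0:ℝ) < (d:ℝ) - lam := by
    have : (1:ℝ) ≤ (d:ℝ) := by exact_mod_cast hd
    linarith
  rw [div_mul_eq_mul_div, le_div_iff₀ hdl]
  -- goal : k * ((d:ℝ) - lam) ≤ -lam * n
  rcases eq_or_lt_of_le hk0 with hk0' | hkpos
  · rw [← hk0']
    have : (0:ℝ) ≤ -lam * n := mul_nonneg (by linarith) hnpos.le
    linarith
  · have h3 : k * (lam - lam*c + c*(d:ℝ)) ≤ 0 := by linarith [hkey]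
    have h4 : lam - lam*c + c*(d:ℝ) ≤ 0 := by
      by_contra hcon
      push_neg at hcon
      linarith [h3, mul_pos hkpos hcon]
    have h5 := mul_nonpos_of_nonneg_of_nonpos hnpos.le h4
    rw [← hcn]
    linarith [h5]
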